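/- Let (P,Q) be a pair of probability measures on a measurable space X and (P',Q') a pair of probability measures on a measurable space X'. Suppose there exist Markov kernels K: X → X' and L: X' → X with PK = P', QK = Q', P'L = P, and Q'L = Q. Then for every ε ≥ 0, δ_{Q‖P}(ε) = δ_{Q'‖P'}(ε). -/

import Mathlib

open MeasureTheory ProbabilityTheory

/-- The privacy curve of the binary experiment `(P,Q)`:
`δ_{Q‖P}(ε) = sup_{A measurable} (Q(A) − e^ε P(A))`. -/
noncomputable def privCurve {X : Type*} [MeasurableSpace X] (P Q : Measure X) (ε : ℝ) : ℝ :=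
  ⨆ A : {A : Set X // MeasurableSet A}, ((Q A.1).toReal - Real.exp ε * (P A.1).toReal)

lemma privCurve_bddAbove {X : Type*} [MeasurableSpace X] (P Q : Measure X)
    [IsProbabilityMeasure Q] (ε : ℝ) :
    BddAbove (Set.range fun A : {A : Set X // MeasurableSet A} =>
      ((Q A.1).toReal - Real.exp ε * (P A.1).toReal)) := by
  refine ⟨1, ?_⟩
  rintro _ ⟨A, rfl⟩
  have h1 : (Q A.1).toReal ≤ 1 := by
    have := prob_le_one (μ := Q) (s := A.1)
    simpa using ENNReal.toReal_mono (by simp) this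
  have h2 : 0 ≤ Real.exp ε * (P A.1).toReal :=
    mul_nonneg (Real.exp_nonneg ε) ENNReal.toReal_nonneg
  simp only
  linarith

lemma privCurve_nonneg {X : Type*} [MeasurableSpace X] (P Q : Measure X)
    [IsProbabilityMeasure Q] (ε : ℝ) : 0 ≤ privCurve P Q ε := by
  have h := le_ciSup (privCurve_bddAbove P Q ε) ⟨∅, MeasurableSet.empty⟩
  simpa [privCurve] using h

lemma privCurve_le_of_kernel {X X' : Type*} [MeasurableSpace X] [MeasurableSpace X']
    (P Q : Measure X) (P' Q' : Measure X')
    [IsProbabilityMeasure P] [IsProbabilityMeasure Q]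
    [IsProbabilityMeasure P'] [IsProbabilityMeasure Q']
    (L : Kernel X' X) [IsMarkovKernel L]
    (hPL : P'.bind L = P) (hQL : Q'.bind L = Q)
    (ε : ℝ) (hε : 0 ≤ ε) :
    privCurve P Q ε ≤ privCurve P' Q' ε := by
  set δ := privCurve P' Q' ε with hδdef
  have hδ0 : 0 ≤ δ := privCurve_nonneg P' Q' ε
  -- key bound on all measurable sets of X'
  have key : ∀ B : Set X', MeasurableSet B →
      Q' B ≤ ENNReal.ofReal δ + ENNReal.ofReal (Real.exp ε) * P' B := by
    intro B hB
    have h := le_ciSup (privCurve_bddAbove P' Q' ε) ⟨B, hB⟩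
    simp only at h
    replace h : (Q' B).toReal - Real.exp ε * (P' B).toReal ≤ δ := h
    have h' : (Q' B).toReal ≤ δ + Real.exp ε * (P' B).toReal := by linarith
    calc Q' B = ENNReal.ofReal (Q' B).toReal :=
          (ENNReal.ofReal_toReal (measure_ne_top _ _)).symm
      _ ≤ ENNReal.ofReal (δ + Real.exp ε * (P' B).toReal) := ENNReal.ofReal_le_ofReal h'
      _ = ENNReal.ofReal δ + ENNReal.ofReal (Real.exp ε * (P' B).toReal) :=
          ENNReal.ofReal_add hδ0 (mul_nonneg (Real.exp_nonneg ε) ENNReal.toReal_nonneg)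
      _ = ENNReal.ofReal δ + ENNReal.ofReal (Real.exp ε) * ENNReal.ofReal (P' B).toReal := by
          rw [ENNReal.ofReal_mul (Real.exp_nonneg ε)]
      _ = ENNReal.ofReal δ + ENNReal.ofReal (Real.exp ε) * P' B := by
          rw [ENNReal.ofReal_toReal (measure_ne_top _ _)]
  -- main pointwise bound for A measurable
  have main : ∀ A : Set X, MeasurableSet A →
      (Q A).toReal - Real.exp ε * (P A).toReal ≤ δ := by
    intro A hA
    set f : X' → ℝ := fun x' => (L x' A).toReal with hfdef
    have hfm : Measurable f := (L.measurable_coe hA).ennreal_toReal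
    have hf01 : ∀ x', f x' ≤ 1 := by
      intro x'
      have := prob_le_one (μ := L x') (s := A)
      simpa [f] using ENNReal.toReal_mono (by simp) this
    have hfof : ∀ x', ENNReal.ofReal (f x') = L x' A := fun x' =>
      ENNReal.ofReal_toReal (measure_ne_top _ _)
    -- layer cake for a probability measure μ'
    have layer : ∀ μ' : Measure X', (μ'.bind L) A
        = ∫⁻ t in Set.Ioi (0:ℝ), μ' {x' | t < f x'} := by
      intro μ'
      rw [Measure.bind_apply hA L.measurable.aemeasurable]
      calc ∫⁻ x', L x' A ∂μ' = ∫⁻ x', ENNReal.ofReal (f x') ∂μ' := by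
            simp_rw [hfof]
        _ = ∫⁻ t in Set.Ioi (0:ℝ), μ' {x' | t < f x'} :=
            lintegral_eq_lintegral_meas_lt μ'
              (Filter.Eventually.of_forall fun x' => ENNReal.toReal_nonneg)
              hfm.aemeasurable
    -- restrict layer cake to Ioc 0 1, since levels above 1 are empty
    have layer' : ∀ μ' : Measure X', (μ'.bind L) A
        = ∫⁻ t in Set.Ioc (0:ℝ) 1, μ' {x' | t < f x'} := by
      intro μ'
      rw [layer μ', ← Set.Ioc_union_Ioi_eq_Ioi (zero_le_one (α := ℝ)),
        lintegral_union measurableSet_Ioi (Set.Ioc_disjoint_Ioi le_rfl)]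
      have hzero : ∫⁻ t in Set.Ioi (1:ℝ), μ' {x' | t < f x'} = 0 := by
        rw [setLIntegral_congr_fun measurableSet_Ioi
          (fun t ht => ?_), lintegral_zero]
        have : {x' | t < f x'} = (∅ : Set X') := by
          ext x'; simp only [Set.mem_setOf_eq, Set.mem_empty_iff_false, iff_false, not_lt]
          exact le_trans (hf01 x') (le_of_lt ht)
        simp [this]
      rw [hzero, add_zero]
    have hQ : Q A = ∫⁻ t in Set.Ioc (0:ℝ) 1, Q' {x' | t < f x'} := by
      rw [← hQL]; exact layer' Q'
    have hP : P A = ∫⁻ t in Set.Ioc (0:ℝ) 1, P' {x' | t < f x'} := by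
      rw [← hPL]; exact layer' P'
    have hsets : ∀ t : ℝ, MeasurableSet {x' | t < f x'} :=
      fun t => measurableSet_lt measurable_const hfm
    have hbound : Q A ≤ ENNReal.ofReal δ + ENNReal.ofReal (Real.exp ε) * P A := by
      rw [hQ, hP]
      calc ∫⁻ t in Set.Ioc (0:ℝ) 1, Q' {x' | t < f x'}
          ≤ ∫⁻ t in Set.Ioc (0:ℝ) 1,
              (ENNReal.ofReal δ + ENNReal.ofReal (Real.exp ε) * P' {x' | t < f x'}) :=
            lintegral_mono fun t => key _ (hsets t)
        _ = ENNReal.ofReal δ * (volume (Set.Ioc (0:ℝ) 1))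
              + ENNReal.ofReal (Real.exp ε) * ∫⁻ t in Set.Ioc (0:ℝ) 1, P' {x' | t < f x'} := by
            rw [lintegral_add_left measurable_const, lintegral_const,
              Measure.restrict_apply MeasurableSet.univ, Set.univ_inter,
              lintegral_const_mul' _ _ ENNReal.ofReal_ne_top]
        _ = ENNReal.ofReal δ
              + ENNReal.ofReal (Real.exp ε) * ∫⁻ t in Set.Ioc (0:ℝ) 1, P' {x' | t < f x'} := by
            rw [Real.volume_Ioc]
            norm_num
    -- convert back to reals
    have hfin : ENNReal.ofReal δ + ENNReal.ofReal (Real.exp ε) * P A ≠ ⊤ := by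
      apply ENNReal.add_ne_top.mpr
      exact ⟨ENNReal.ofReal_ne_top,
        ENNReal.mul_ne_top ENNReal.ofReal_ne_top (measure_ne_top _ _)⟩
    have := ENNReal.toReal_mono hfin hbound
    rw [ENNReal.toReal_add ENNReal.ofReal_ne_top
        (ENNReal.mul_ne_top ENNReal.ofReal_ne_top (measure_ne_top _ _)),
      ENNReal.toReal_mul, ENNReal.toReal_ofReal hδ0,
      ENNReal.toReal_ofReal (Real.exp_nonneg ε)] at this
    linarith
  have : Nonempty {A : Set X // MeasurableSet A} := ⟨⟨∅, MeasurableSet.empty⟩⟩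
  exact ciSup_le fun A => main A.1 A.2

/-- Blackwell-equivalent experiments have identical privacy curves: if there are Markov
kernels `K : X → X'` and `L : X' → X` with `PK = P'`, `QK = Q'`, `P'L = P`, `Q'L = Q`,
then `δ_{Q‖P}(ε) = δ_{Q'‖P'}(ε)` for every `ε ≥ 0`. -/
theorem privacy_curve_blackwell_equivalence
    {X X' : Type*} [MeasurableSpace X] [MeasurableSpace X']
    (P Q : Measure X) (P' Q' : Measure X')
    [IsProbabilityMeasure P] [IsProbabilityMeasure Q]
    [IsProbabilityMeasure P'] [IsProbabilityMeasure Q']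
    (K : Kernel X X') [IsMarkovKernel K]
    (L : Kernel X' X) [IsMarkovKernel L]
    (hPK : P.bind K = P') (hQK : Q.bind K = Q')
    (hPL : P'.bind L = P) (hQL : Q'.bind L = Q)
    (ε : ℝ) (hε : 0 ≤ ε) :
    privCurve P Q ε = privCurve P' Q' ε := by
  exact le_antisymm
    (privCurve_le_of_kernel P Q P' Q' L hPL hQL ε hε)
    (privCurve_le_of_kernel P' Q' P Q K hPK hQK ε hε)
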